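/- Consider the cascade gain structure: γ_{(k+1)k} := 0 if k is a power of 2 and γ_{(k+1)k} := k/(k+1) (as a linear function r ↦ (k/(k+1))·r) otherwise, with all other gains zero. Then for every k ≥ 1, the component of Γ^{2^{k−1}−1}(𝟙) with index 2ᵏ equals the product ∏_{m=2^{k−1}+1}^{2^k−1} m/(m+1) = (2^{k−1}+1)/2ᵏ ≥ 1/2. Consequently Γⁿ(𝟙) does not converge to 0 in ℓ∞-norm, i.e. the induced discrete-time system is not uniformly globally asymptotically stable. -/

import Mathlib

open scoped Classical

/-- The linear cascade gain coefficient: `γ_{k+1,k} = 0` if `k` is a power of `2`,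
and `γ_{k+1,k}(r) = (k/(k+1))·r` otherwise; `gainC k` is the coefficient `k/(k+1)`
(or `0`). -/
noncomputable def gainC (k : ℕ) : ℝ :=
  if ∃ m : ℕ, k = 2 ^ m then 0 else (k : ℝ) / (k + 1)

/-- The induced cascade gain operator: `Γᵢ(s) = γ_{i,i-1}(s_{i-1})` for `i ≥ 2`,
and `Γᵢ(s) = 0` for `i ≤ 1`. -/
noncomputable def cascadeGamma (s : ℕ → ℝ) : ℕ → ℝ :=
  fun i => if i ≤ 1 then 0 else gainC (i - 1) * s (i - 1)

lemma gainC_nonneg (k : ℕ) : 0 ≤ gainC k := by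
  unfold gainC; split
  · exact le_refl 0
  · positivity

lemma gainC_le_one (k : ℕ) : gainC k ≤ 1 := by
  unfold gainC; split
  · norm_num
  · rw [div_le_one (by positivity)]; linarith

lemma iter_nonneg (n : ℕ) (i : ℕ) : 0 ≤ cascadeGamma^[n] (fun _ => 1) i := by
  induction n generalizing i with
  | zero => simp
  | succ n ih =>
      rw [Function.iterate_succ_apply']
      unfold cascadeGamma
      split
      · exact le_refl 0
      · exact mul_nonneg (gainC_nonneg _) (ih _)

lemma iter_le_one (n : ℕ) (i : ℕ) : cascadeGamma^[n] (fun _ => 1) i ≤ 1 := by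
  induction n generalizing i with
  | zero => simp
  | succ n ih =>
      rw [Function.iterate_succ_apply']
      unfold cascadeGamma
      split
      · norm_num
      · exact mul_le_one₀ (gainC_le_one _) (iter_nonneg _ _) (ih _)

lemma cascadeGamma_apply (s : ℕ → ℝ) (i : ℕ) :
    cascadeGamma s i = if i ≤ 1 then 0 else gainC (i - 1) * s (i - 1) := rfl

lemma iter_prod (n : ℕ) : ∀ i, n + 1 ≤ i →
    cascadeGamma^[n] (fun _ => 1) i = ∏ j ∈ Finset.Ico (i - n) i, gainC j := by
  induction n with
  | zero => intro i hi; simp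
  | succ n ih =>
      intro i hi
      rw [Function.iterate_succ_apply', cascadeGamma_apply]
      rw [if_neg (by omega)]
      rw [ih (i - 1) (by omega)]
      have h1 : i - 1 - n = i - (n + 1) := by omega
      have h2 : Finset.Ico (i - (n + 1)) i = Finset.Ico (i - (n + 1)) ((i - 1) + 1) := by
        congr 1; omega
      rw [h1, h2, Finset.prod_Ico_succ_top (by omega)]
      ring

lemma telescope : ∀ c b : ℕ, 1 ≤ b → b ≤ c →
    (∏ j ∈ Finset.Ico b c, ((j : ℝ) / (j + 1))) = (b : ℝ) / c := by
  intro c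
  induction c with
  | zero => intro b h1 h2; omega
  | succ c ih =>
      intro b h1 h2
      rcases eq_or_lt_of_le h2 with h | h
      · subst h
        rw [Finset.Ico_self, Finset.prod_empty,
          div_self (Nat.cast_ne_zero.mpr (by omega))]
      · rw [Finset.prod_Ico_succ_top (by omega), ih b h1 (by omega)]
        have hc0 : (c:ℝ) ≠ 0 := Nat.cast_ne_zero.mpr (by omega)
        have hc1 : ((c:ℝ) + 1) ≠ 0 := by positivity
        push_cast
        field_simp
        try ring

/-- For the cascade gain operator, the component of index `2ᵏ` of
`Γ^{2^{k-1}-1}(𝟙)` equals `(2^{k-1}+1)/2ᵏ ≥ 1/2`; consequently `Γⁿ(𝟙)` does not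
converge to `0` in the `ℓ∞`-norm, i.e. the induced discrete-time system is not UGAS. -/
theorem stmt18 :
    (∀ k : ℕ, 1 ≤ k →
      (cascadeGamma^[2 ^ (k - 1) - 1] (fun _ => 1)) (2 ^ k)
          = ((2 ^ (k - 1) : ℝ) + 1) / 2 ^ k ∧
      (1 / 2 : ℝ) ≤ (cascadeGamma^[2 ^ (k - 1) - 1] (fun _ => 1)) (2 ^ k)) ∧
    ¬ Filter.Tendsto (fun n => ⨆ i, |(cascadeGamma^[n] (fun _ => (1 : ℝ))) i|)
        Filter.atTop (nhds 0) := by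
  have key : ∀ k : ℕ, 1 ≤ k →
      (cascadeGamma^[2 ^ (k - 1) - 1] (fun _ => 1)) (2 ^ k)
          = ((2 ^ (k - 1) : ℝ) + 1) / 2 ^ k := by
    intro k hk
    have ha1 : 1 ≤ 2 ^ (k - 1) := Nat.one_le_two_pow
    have h2k : 2 ^ k = 2 * 2 ^ (k - 1) := by
      rw [← pow_succ']
      congr 1; omega
    rw [iter_prod (2 ^ (k - 1) - 1) (2 ^ k) (by omega)]
    have hsub : 2 ^ k - (2 ^ (k - 1) - 1) = 2 ^ (k - 1) + 1 := by omega
    rw [hsub]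
    have hgc : ∀ j ∈ Finset.Ico (2 ^ (k - 1) + 1) (2 ^ k), gainC j = (j : ℝ) / (j + 1) := by
      intro j hj
      simp only [Finset.mem_Ico] at hj
      unfold gainC
      rw [if_neg]
      rintro ⟨m, rfl⟩
      have h1 : 2 ^ (k - 1) < 2 ^ m := by omega
      have h2 : 2 ^ m < 2 ^ k := by omega
      have := (Nat.pow_lt_pow_iff_right (by norm_num : 1 < 2)).mp h1
      have := (Nat.pow_lt_pow_iff_right (by norm_num : 1 < 2)).mp h2
      omega
    rw [Finset.prod_congr rfl hgc, telescope (2 ^ k) (2 ^ (k - 1) + 1) (by omega) (by omega)]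
    push_cast
    ring
  constructor
  · intro k hk
    refine ⟨key k hk, ?_⟩
    rw [key k hk]
    have hpos : (0:ℝ) < 2 ^ k := by positivity
    rw [div_le_div_iff₀ (by norm_num) hpos]
    have h2k : (2:ℝ) ^ k = 2 * 2 ^ (k - 1) := by
      rw [← pow_succ']
      congr 1; omega
    rw [h2k]; nlinarith [pow_pos (by norm_num : (0:ℝ) < 2) (k-1)]
  · intro h
    have htop : Filter.Tendsto (fun k : ℕ => 2 ^ k - 1) Filter.atTop Filter.atTop := by
      apply Filter.tendsto_atTop_mono
        (fun k => by have := Nat.lt_two_pow_self (n := k); omega : ∀ k : ℕ, k ≤ 2 ^ k - 1)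
        Filter.tendsto_id
    have hcomp := h.comp htop
    have hlb : ∀ k : ℕ, (1/2 : ℝ) ≤ ⨆ i, |(cascadeGamma^[2 ^ k - 1] (fun _ => (1:ℝ))) i| := by
      intro k
      have hk1 : 1 ≤ k + 1 := by omega
      have hkey := key (k + 1) hk1
      have hk2 : (k + 1) - 1 = k := by omega
      have hval : (1/2 : ℝ) ≤ (cascadeGamma^[2 ^ k - 1] (fun _ => 1)) (2 ^ (k+1)) := by
        have := hkey
        rw [hk2] at this
        rw [this]
        have hpos : (0:ℝ) < 2 ^ (k+1) := by positivity
        rw [div_le_div_iff₀ (by norm_num) hpos]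
        have : (2:ℝ) ^ (k+1) = 2 * 2 ^ k := by ring
        rw [this]; nlinarith [pow_pos (by norm_num : (0:ℝ) < 2) k]
      refine le_trans (hval.trans (le_abs_self _)) ?_
      apply le_ciSup (f := fun i => |(cascadeGamma^[2 ^ k - 1] (fun _ => (1:ℝ))) i|)
      refine ⟨1, ?_⟩
      rintro x ⟨i, rfl⟩
      simp only
      rw [abs_of_nonneg (iter_nonneg _ _)]
      exact iter_le_one _ _
    have := hcomp.eventually (eventually_lt_nhds (by norm_num : (0:ℝ) < 1/2))
    rw [Filter.eventually_atTop] at this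
    obtain ⟨N, hN⟩ := this
    exact absurd (hlb N) (not_le.mpr (hN N le_rfl))
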